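/- Let {u_n} be a sequence of unit vectors in ℝ², let S_u denote Steiner symmetrization in direction u, and let T_n = S_{u_n} ∘ ⋯ ∘ S_{u_1}. Suppose that for every nonempty compact set K ⊆ ℝ², the sequence {T_n K} (taking Steiner symmetrals with closed segments) converges in the Hausdorff distance to the closed ball K* centered at the origin with λ(K*) = λ(K). Then for every Lebesgue measurable set M ⊆ ℝ² of finite Lebesgue measure, λ(T_n M Δ M*) → 0 as n → ∞, where M* is the ball centered at the origin with λ(M*) = λ(M). -/

import Mathlib

open MeasureTheory Filter Topology
open Set
open scoped ENNReal

/-- The plane `ℝ²`. -/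
abbrev Plane := EuclideanSpace ℝ (Fin 2)

/-- The Steiner symmetral (with *closed* segments, suitable for compact sets) of
`K ⊆ ℝ²` in the direction of the unit vector `u`. -/
noncomputable def steinerSymmetralClosed (u : Plane) (K : Set Plane) : Set Plane :=
  {y | ∃ (x : Plane) (t : ℝ), inner ℝ x u = (0 : ℝ) ∧ y = x + t • u ∧
    {s : ℝ | x + s • u ∈ K}.Nonempty ∧
    ENNReal.ofReal (2 * |t|) ≤ volume {s : ℝ | x + s • u ∈ K}}

/-- The Steiner symmetral (with *open* segments, suitable for measurable sets) of
`M ⊆ ℝ²` in the direction of the unit vector `u`. -/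
noncomputable def steinerSymmetral (u : Plane) (M : Set Plane) : Set Plane :=
  {y | ∃ (x : Plane) (t : ℝ), inner ℝ x u = (0 : ℝ) ∧ y = x + t • u ∧
    ENNReal.ofReal (2 * |t|) < volume {s : ℝ | x + s • u ∈ M}}

/-- The Steiner process with closed segments: `T n = S_{u_n} ∘ ⋯ ∘ S_{u_1}`
(with 1-based indexing of the directions, so `u n` is the `(n+1)`-st direction). -/
noncomputable def steinerProcessClosed (u : ℕ → Plane) : ℕ → Set Plane → Set Plane
  | 0, M => M
  | n + 1, M => steinerSymmetralClosed (u n) (steinerProcessClosed u n M)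

/-- The Steiner process with open segments: `T n = S_{u_n} ∘ ⋯ ∘ S_{u_1}`. -/
noncomputable def steinerProcess (u : ℕ → Plane) : ℕ → Set Plane → Set Plane
  | 0, M => M
  | n + 1, M => steinerSymmetral (u n) (steinerProcess u n M)

/-! ### The coordinate model -/

noncomputable def symC (M : Set (ℝ × ℝ)) : Set (ℝ × ℝ) :=
  {p | ENNReal.ofReal (2 * |p.2|) < volume {s : ℝ | (p.1, s) ∈ M}}

lemma volume_slice (c : ℝ≥0∞) : volume {t : ℝ | ENNReal.ofReal (2 * |t|) < c} = c := by
  rcases eq_or_ne c ⊤ with rfl | hc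
  · have h : {t : ℝ | ENNReal.ofReal (2 * |t|) < ⊤} = Set.univ := by
      ext t; simp only [Set.mem_setOf_eq, ENNReal.ofReal_lt_top, Set.mem_univ]
    rw [h]; simp
  · have h : {t : ℝ | ENNReal.ofReal (2 * |t|) < c} = Metric.ball (0 : ℝ) (c.toReal / 2) := by
      ext t
      simp only [Set.mem_setOf_eq, Metric.mem_ball, Real.dist_eq, sub_zero]
      rw [ENNReal.ofReal_lt_iff_lt_toReal (by positivity) hc]
      constructor <;> intro h <;> [linarith [abs_nonneg t]; linarith]
    rw [h, Real.volume_ball]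
    rw [show 2 * (c.toReal / 2) = c.toReal by ring, ENNReal.ofReal_toReal hc]

lemma measurableSet_symC {M : Set (ℝ × ℝ)} (hM : MeasurableSet M) : MeasurableSet (symC M) := by
  have h1 : Measurable fun a : ℝ => volume (Prod.mk a ⁻¹' M) := measurable_measure_prodMk_left hM
  have h2 : Measurable fun p : ℝ × ℝ => ENNReal.ofReal (2 * |p.2|) :=
    (ENNReal.measurable_ofReal.comp ((measurable_const.mul (measurable_snd.abs))))
  exact measurableSet_lt h2 (h1.comp measurable_fst)

lemma volume_symC {M : Set (ℝ × ℝ)} (hM : MeasurableSet M) : volume (symC M) = volume M := by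
  rw [Measure.volume_eq_prod, Measure.prod_apply (measurableSet_symC hM), Measure.prod_apply hM]
  refine lintegral_congr fun a => ?_
  have h : Prod.mk a ⁻¹' symC M
      = {t : ℝ | ENNReal.ofReal (2 * |t|) < volume (Prod.mk a ⁻¹' M)} := rfl
  rw [h, volume_slice]

/-! ### Transfer to the plane -/

noncomputable def perp (u : Plane) : Plane := !₂[-(u 1), u 0]

lemma inner_apply' (x y : Plane) : @inner ℝ _ _ x y = x 0 * y 0 + x 1 * y 1 := by
  rw [PiLp.inner_apply]
  simp [RCLike.inner_apply, Fin.sum_univ_two]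
  ring

lemma inner_perp_self (u : Plane) : @inner ℝ _ _ (perp u) u = 0 := by
  rw [inner_apply']
  show -(u 1) * u 0 + u 0 * u 1 = 0
  ring

lemma inner_self_perp (u : Plane) : @inner ℝ _ _ u (perp u) = 0 := by
  rw [inner_apply']
  show u 0 * (-(u 1)) + u 1 * u 0 = 0
  ring

lemma norm_sq' (x : Plane) : ‖x‖ ^ 2 = x 0 ^ 2 + x 1 ^ 2 := by
  rw [← real_inner_self_eq_norm_sq, inner_apply']; ring

lemma norm_perp {u : Plane} (hu : ‖u‖ = 1) : ‖perp u‖ = 1 := by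
  have h1 : ‖perp u‖ ^ 2 = 1 := by
    rw [norm_sq']
    show (-(u 1)) ^ 2 + u 0 ^ 2 = 1
    have := norm_sq' u
    rw [hu] at this
    nlinarith
  nlinarith [norm_nonneg (perp u)]

lemma orthonormal_pair {u : Plane} (hu : ‖u‖ = 1) : Orthonormal ℝ ![perp u, u] := by
  rw [orthonormal_iff_ite]
  intro i j
  fin_cases i <;> fin_cases j <;>
    simp only [Fin.mk_zero, Fin.mk_one, Matrix.cons_val_zero, Matrix.cons_val_one,
      Matrix.head_cons, if_true, if_false, Fin.zero_eq_one_iff, Fin.one_eq_zero_iff,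
      Nat.succ_ne_self, reduceIte, one_ne_zero, zero_ne_one]
  · rw [real_inner_self_eq_norm_sq, norm_perp hu]; norm_num
  · rw [inner_perp_self]
  · rw [real_inner_comm, inner_perp_self]
  · rw [real_inner_self_eq_norm_sq, hu]; norm_num

noncomputable def ob {u : Plane} (hu : ‖u‖ = 1) : OrthonormalBasis (Fin 2) ℝ Plane :=
  OrthonormalBasis.mk (orthonormal_pair hu) (by
    have li := (orthonormal_pair hu).linearIndependent
    have hcard : Fintype.card (Fin 2) = Module.finrank ℝ Plane := by
      simp [finrank_euclideanSpace]
    have hB := (basisOfLinearIndependentOfCardEqFinrank li hcard).span_eq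
    rw [coe_basisOfLinearIndependentOfCardEqFinrank] at hB
    rw [hB])

lemma ob_zero {u : Plane} (hu : ‖u‖ = 1) : ob hu 0 = perp u := by
  simp [ob, OrthonormalBasis.coe_mk]

lemma ob_one {u : Plane} (hu : ‖u‖ = 1) : ob hu 1 = u := by
  simp [ob, OrthonormalBasis.coe_mk]

noncomputable def planeEquiv {u : Plane} (hu : ‖u‖ = 1) : (ℝ × ℝ) ≃ᵐ Plane :=
  (MeasurableEquiv.finTwoArrow.symm.trans
    (MeasurableEquiv.toLp 2 (Fin 2 → ℝ))).trans (ob hu).measurableEquiv.symm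

lemma planeEquiv_mp {u : Plane} (hu : ‖u‖ = 1) :
    MeasurePreserving (planeEquiv hu) volume volume := by
  have h1 : MeasurePreserving (MeasurableEquiv.finTwoArrow (α := ℝ)).symm volume volume :=
    MeasurePreserving.symm _ (volume_preserving_finTwoArrow ℝ)
  have h2 : MeasurePreserving (MeasurableEquiv.toLp 2 (Fin 2 → ℝ)) volume volume :=
    MeasurePreserving.symm _ (EuclideanSpace.volume_preserving_symm_measurableEquiv_toLp (Fin 2))
  have h3 : MeasurePreserving (ob hu).measurableEquiv.symm volume volume :=
    MeasurePreserving.symm _ (ob hu).measurePreserving_measurableEquiv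
  exact (h3.comp (h2.comp h1) : _)

lemma planeEquiv_apply {u : Plane} (hu : ‖u‖ = 1) (a t : ℝ) :
    planeEquiv hu (a, t) = a • perp u + t • u := by
  show (ob hu).measurableEquiv.symm
    ((MeasurableEquiv.toLp 2 (Fin 2 → ℝ)) (MeasurableEquiv.finTwoArrow.symm (a, t)))
    = a • perp u + t • u
  have h1 : (MeasurableEquiv.finTwoArrow.symm (a, t) : Fin 2 → ℝ) = ![a, t] := rfl
  rw [h1]
  have h2 : ((MeasurableEquiv.toLp 2 (Fin 2 → ℝ)) ![a, t] : Plane)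
      = (WithLp.equiv 2 (Fin 2 → ℝ)).symm ![a, t] := rfl
  rw [h2]
  show (ob hu).repr.symm _ = a • perp u + t • u
  rw [← OrthonormalBasis.sum_repr_symm]
  rw [Fin.sum_univ_two]
  rw [ob_zero hu, ob_one hu]
  rfl

lemma decomp {u : Plane} (hu : ‖u‖ = 1) {x : Plane} (hx : inner ℝ x u = (0 : ℝ)) :
    x = (inner ℝ x (perp u) : ℝ) • perp u := by
  have h := (ob hu).sum_repr x
  rw [Fin.sum_univ_two] at h
  rw [OrthonormalBasis.repr_apply_apply, OrthonormalBasis.repr_apply_apply,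
    ob_zero hu, ob_one hu] at h
  rw [← real_inner_comm u x, hx, zero_smul, add_zero] at h
  rw [← real_inner_comm]
  exact h.symm

lemma preimage_steiner {u : Plane} (hu : ‖u‖ = 1) (M : Set Plane) :
    ⇑(planeEquiv hu) ⁻¹' (steinerSymmetral u M) = symC (⇑(planeEquiv hu) ⁻¹' M) := by
  have hperp : @inner ℝ _ _ (perp u) (perp u) = 1 := by
    rw [real_inner_self_eq_norm_sq, norm_perp hu]; norm_num
  have huu : @inner ℝ _ _ u u = 1 := by
    rw [real_inner_self_eq_norm_sq, hu]; norm_num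
  ext p
  obtain ⟨a, t⟩ := p
  simp only [mem_preimage, symC, mem_setOf_eq, steinerSymmetral]
  constructor
  · rintro ⟨x, t', hx, heq, hlt⟩
    rw [planeEquiv_apply hu] at heq
    -- derive t = t' and x = a • perp u
    have ht : t = t' := by
      have h1 := congrArg (fun y => (inner ℝ y u : ℝ)) heq
      simp only [inner_add_left, real_inner_smul_left, hx, inner_perp_self, huu] at h1
      linarith
    have hxx : x = a • perp u := by
      have h2 := congrArg (fun y => (inner ℝ y (perp u) : ℝ)) heq
      simp only [inner_add_left, real_inner_smul_left, hperp, inner_self_perp] at h2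
      have ha : (inner ℝ x (perp u) : ℝ) = a := by linarith
      rw [decomp hu hx, ha]
    subst ht
    have hset : {s : ℝ | (planeEquiv hu) (a, s) ∈ M} = {s : ℝ | x + s • u ∈ M} := by
      ext s; simp only [mem_setOf_eq, planeEquiv_apply hu, hxx]
    rw [hset]
    exact hlt
  · intro h
    refine ⟨a • perp u, t, ?_, by rw [planeEquiv_apply hu], ?_⟩
    · rw [real_inner_smul_left, inner_perp_self]; ring
    · have hset : {s : ℝ | a • perp u + s • u ∈ M} = {s : ℝ | (planeEquiv hu) (a, s) ∈ M} := by
        ext s; simp only [mem_setOf_eq, planeEquiv_apply hu]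
      rw [hset]
      exact h

lemma steiner_eq_image {u : Plane} (hu : ‖u‖ = 1) (M : Set Plane) :
    steinerSymmetral u M = ⇑(planeEquiv hu) '' symC (⇑(planeEquiv hu) ⁻¹' M) := by
  rw [← preimage_steiner hu M, MeasurableEquiv.image_eq_preimage_symm]
  ext y
  simp [MeasurableEquiv.apply_symm_apply]

lemma measurableSet_steiner {u : Plane} (hu : ‖u‖ = 1) {M : Set Plane} (hM : MeasurableSet M) :
    MeasurableSet (steinerSymmetral u M) := by
  rw [steiner_eq_image hu, MeasurableEquiv.image_eq_preimage_symm]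
  exact (planeEquiv hu).symm.measurable (measurableSet_symC ((planeEquiv hu).measurable hM))

lemma volume_steiner {u : Plane} (hu : ‖u‖ = 1) {M : Set Plane} (hM : MeasurableSet M) :
    volume (steinerSymmetral u M) = volume M := by
  have h1 : volume (steinerSymmetral u M)
      = volume (⇑(planeEquiv hu) ⁻¹' (steinerSymmetral u M)) :=
    ((planeEquiv_mp hu).measure_preimage (measurableSet_steiner hu hM).nullMeasurableSet).symm
  rw [h1, preimage_steiner hu M, volume_symC ((planeEquiv hu).measurable hM),
    (planeEquiv_mp hu).measure_preimage hM.nullMeasurableSet]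

/-! ### Elementary monotonicity facts -/

lemma steiner_mono (u : Plane) {M N : Set Plane} (h : M ⊆ N) :
    steinerSymmetral u M ⊆ steinerSymmetral u N := by
  rintro y ⟨x, t, hx, rfl, hlt⟩
  exact ⟨x, t, hx, rfl, hlt.trans_le (measure_mono fun s hs => h hs)⟩

lemma steiner_subset_closed (u : Plane) (M : Set Plane) :
    steinerSymmetral u M ⊆ steinerSymmetralClosed u M := by
  rintro y ⟨x, t, hx, rfl, hlt⟩
  refine ⟨x, t, hx, rfl, ?_, hlt.le⟩
  refine nonempty_of_measure_ne_zero (μ := volume) (fun h0 => ?_)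
  rw [h0] at hlt
  simp at hlt

lemma steinerClosed_mono (u : Plane) {M N : Set Plane} (h : M ⊆ N) :
    steinerSymmetralClosed u M ⊆ steinerSymmetralClosed u N := by
  rintro y ⟨x, t, hx, rfl, hne, hle⟩
  exact ⟨x, t, hx, rfl, hne.mono fun s hs => h hs,
    hle.trans (measure_mono fun s hs => h hs)⟩

/-! ### Process lemmas -/

lemma process_measurable {u : ℕ → Plane} (hu : ∀ n, ‖u n‖ = 1) {M : Set Plane}
    (hM : MeasurableSet M) : ∀ n, MeasurableSet (steinerProcess u n M)
  | 0 => hM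
  | n + 1 => measurableSet_steiner (hu n) (process_measurable hu hM n)

lemma process_volume {u : ℕ → Plane} (hu : ∀ n, ‖u n‖ = 1) {M : Set Plane}
    (hM : MeasurableSet M) : ∀ n, volume (steinerProcess u n M) = volume M
  | 0 => rfl
  | n + 1 => by
    rw [show steinerProcess u (n+1) M = steinerSymmetral (u n) (steinerProcess u n M) from rfl,
      volume_steiner (hu n) (process_measurable hu hM n), process_volume hu hM n]

lemma process_mono (u : ℕ → Plane) {K M : Set Plane} (h : K ⊆ M) :
    ∀ n, steinerProcess u n K ⊆ steinerProcess u n M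
  | 0 => h
  | n + 1 => steiner_mono (u n) (process_mono u h n)

lemma process_subset_closed (u : ℕ → Plane) (K : Set Plane) :
    ∀ n, steinerProcess u n K ⊆ steinerProcessClosed u n K
  | 0 => subset_rfl
  | n + 1 => (steiner_mono (u n) (process_subset_closed u K n)).trans
      (steiner_subset_closed (u n) _)

/-! ### Ball volume in the plane -/

lemma vol_ball_plane (r : ℝ) :
    volume (Metric.ball (0 : Plane) r) = ENNReal.ofReal r ^ 2 * ENNReal.ofReal Real.pi := by
  rw [EuclideanSpace.volume_ball]
  norm_num [Real.Gamma_two, Real.sq_sqrt Real.pi_pos.le]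

lemma vol_cball_plane (r : ℝ) :
    volume (Metric.closedBall (0 : Plane) r) = ENNReal.ofReal r ^ 2 * ENNReal.ofReal Real.pi := by
  rw [EuclideanSpace.volume_closedBall]
  norm_num [Real.Gamma_two, Real.sq_sqrt Real.pi_pos.le]

/-- Suppose the Steiner process `T_n = S_{u_n} ∘ ⋯ ∘ S_{u_1}` is such
that, for every nonempty compact `K ⊆ ℝ²`, the sequence `T_n K` (with closed segments)
converges in the Hausdorff distance to the closed ball `K*` centered at the origin with
`λ(K*) = λ(K)`.  Then for every measurable `M ⊆ ℝ²` of finite measure,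
`λ(T_n M Δ M*) → 0`, where `M*` is the ball centered at the origin with `λ(M*) = λ(M)`. -/
theorem stmt_5 (u : ℕ → Plane) (hu : ∀ n, ‖u n‖ = 1)
    (hcompact : ∀ K : Set Plane, IsCompact K → K.Nonempty →
      ∀ r : ℝ, 0 ≤ r → volume (Metric.closedBall (0 : Plane) r) = volume K →
        Tendsto (fun n => EMetric.hausdorffEdist (steinerProcessClosed u n K)
          (Metric.closedBall (0 : Plane) r)) atTop (𝓝 0)) :
    ∀ M : Set Plane, MeasurableSet M → volume M < ⊤ →
      ∀ r : ℝ, 0 ≤ r → volume (Metric.ball (0 : Plane) r) = volume M →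
        Tendsto (fun n => volume (symmDiff (steinerProcess u n M)
          (Metric.ball (0 : Plane) r))) atTop (𝓝 0) := by
  intro M hM hMfin r hr hrvol
  rw [ENNReal.tendsto_atTop_zero]
  intro ε hε
  rcases eq_or_ne (volume M) 0 with hM0 | hM0
  · -- trivial case of a null set
    have hr0 : r = 0 := by
      by_contra hne
      have hrpos : 0 < r := lt_of_le_of_ne hr (Ne.symm hne)
      have hpos := Metric.measure_ball_pos volume (0 : Plane) hrpos
      rw [hrvol, hM0] at hpos
      exact lt_irrefl 0 hpos
    refine ⟨0, fun n _ => ?_⟩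
    have hball : Metric.ball (0 : Plane) r = ∅ := by rw [hr0]; exact Metric.ball_zero
    rw [hball]
    have hsd : symmDiff (steinerProcess u n M) (∅ : Set Plane) = steinerProcess u n M := by
      simp [Set.symmDiff_def]
    rw [hsd, process_volume hu hM n, hM0]
    exact zero_le
  · -- main case
    set m := min (min ε 1) (volume M) with hm
    have hmne0 : m ≠ 0 := by
      refine (lt_min (lt_min hε one_pos) (pos_iff_ne_zero.2 hM0)).ne'
    have hmtop : m ≠ ⊤ := by
      refine ne_top_of_le_ne_top (by norm_num : (1:ℝ≥0∞) ≠ ⊤)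
        ((min_le_left _ _).trans (min_le_right _ _))
    set δ := m / 4 with hδ
    have hδ0 : δ ≠ 0 := by
      simp only [hδ, ne_eq, ENNReal.div_eq_zero_iff, not_or]
      exact ⟨hmne0, by norm_num⟩
    have hδltM : δ < volume M := by
      have h1 : δ ≤ m / 2 := by
        rw [hδ]
        gcongr <;> norm_num
      have h2 : m / 2 < m := ENNReal.half_lt_self hmne0 hmtop
      exact lt_of_le_of_lt h1 (h2.trans_le (min_le_right _ _))
    obtain ⟨K, hKM, hKc, hKvol⟩ := hM.exists_isCompact_lt_add hMfin.ne hδ0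
    have hKne : K.Nonempty := by
      rw [Set.nonempty_iff_ne_empty]
      rintro rfl
      rw [measure_empty, zero_add] at hKvol
      exact absurd hKvol (not_lt.2 hδltM.le)
    have hKfin : volume K ≠ ⊤ := (lt_of_le_of_lt (measure_mono hKM) hMfin).ne
    set C := ENNReal.ofReal Real.pi with hC
    have hC0 : C ≠ 0 := by
      simp [hC, ENNReal.ofReal_eq_zero, not_le, Real.pi_pos]
    have hCtop : C ≠ ⊤ := ENNReal.ofReal_ne_top
    set rK := Real.sqrt ((volume K / C).toReal) with hrKdef
    have hrK0 : 0 ≤ rK := Real.sqrt_nonneg _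
    have hdivfin : volume K / C ≠ ⊤ := (ENNReal.div_lt_top hKfin hC0).ne
    have hvolK : volume (Metric.closedBall (0 : Plane) rK) = volume K := by
      rw [vol_cball_plane, ← ENNReal.ofReal_pow hrK0, hrKdef,
        Real.sq_sqrt ENNReal.toReal_nonneg, ENNReal.ofReal_toReal hdivfin,
        ENNReal.div_mul_cancel hC0 hCtop]
    have hrKr : rK ≤ r := by
      by_contra hlt
      push_neg at hlt
      have h1 : volume (Metric.ball (0 : Plane) r) < volume (Metric.closedBall (0 : Plane) rK) := by
        rw [vol_ball_plane, vol_cball_plane]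
        refine ENNReal.mul_lt_mul_left hC0 hCtop ?_
        exact ENNReal.pow_lt_pow_left two_ne_zero
          ((ENNReal.ofReal_lt_ofReal_iff (lt_of_le_of_lt hr hlt)).2 hlt)
      rw [hrvol, hvolK] at h1
      exact absurd (measure_mono hKM) (not_le.2 h1)
    -- choose ε' > 0 with volume (closedBall 0 (r + ε')) < volume (ball 0 r) + δ
    have hBfin : volume (Metric.ball (0 : Plane) r) ≠ ⊤ := by rw [hrvol]; exact hMfin.ne
    have hcont : Tendsto (fun e : ℝ => volume (Metric.closedBall (0 : Plane) (r + e)))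
        (𝓝[>] (0:ℝ)) (𝓝 (volume (Metric.ball (0 : Plane) r))) := by
      have h1 : Tendsto (fun e : ℝ => r + e) (𝓝[>] (0:ℝ)) (𝓝 r) := by
        have h0 : Tendsto (fun e : ℝ => r + e) (𝓝 (0:ℝ)) (𝓝 (r + 0)) :=
          (continuous_const.add continuous_id).tendsto 0
        rw [add_zero] at h0
        exact h0.mono_left nhdsWithin_le_nhds
      have h2 : Tendsto (fun e : ℝ => ENNReal.ofReal (r + e)) (𝓝[>] (0:ℝ))
          (𝓝 (ENNReal.ofReal r)) := (ENNReal.continuous_ofReal.tendsto r).comp h1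
      have h3 := ENNReal.Tendsto.mul_const (ENNReal.Tendsto.pow h2 (n := 2)) (b := C) (Or.inr hCtop)
      rw [show ENNReal.ofReal r ^ 2 * C = volume (Metric.ball (0 : Plane) r) from
        (vol_ball_plane r).symm] at h3
      refine h3.congr fun e => ?_
      rw [vol_cball_plane]
    have hlt : volume (Metric.ball (0 : Plane) r) < volume (Metric.ball (0 : Plane) r) + δ :=
      ENNReal.lt_add_right hBfin hδ0
    obtain ⟨ε', hε'bound, hε'pos⟩ :=
      ((hcont.eventually_lt_const hlt).and self_mem_nhdsWithin).exists
    -- apply the hypothesis on the compact set K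
    have htend := hcompact K hKc hKne rK hrK0 hvolK
    obtain ⟨N, hN⟩ := (ENNReal.tendsto_atTop_zero.1 htend) (ENNReal.ofReal ε')
      (ENNReal.ofReal_pos.2 hε'pos)
    refine ⟨N, fun n hn => ?_⟩
    have hQball : steinerProcessClosed u n K ⊆ Metric.closedBall (0 : Plane) (rK + ε') := by
      intro x hx
      have h5 : EMetric.infEdist x (Metric.closedBall (0 : Plane) rK) ≤ ENNReal.ofReal ε' :=
        (EMetric.infEdist_le_hausdorffEdist_of_mem hx).trans (hN n hn)
      have h6 : x ∈ Metric.cthickening ε' (Metric.closedBall (0 : Plane) rK) := h5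
      rwa [cthickening_closedBall hε'pos.le hrK0, add_comm] at h6
    set A := steinerProcess u n M with hA
    set P := steinerProcess u n K with hP
    have hPA : P ⊆ A := process_mono u hKM n
    have hPball : P ⊆ Metric.closedBall (0 : Plane) (rK + ε') :=
      (process_subset_closed u K n).trans hQball
    set B := Metric.ball (0 : Plane) r with hB
    set D := Metric.closedBall (0 : Plane) (r + ε') with hD
    have hPD : P ⊆ D :=
      hPball.trans (Metric.closedBall_subset_closedBall (by linarith))
    have hBD : B ⊆ D :=
      Metric.ball_subset_closedBall.trans (Metric.closedBall_subset_closedBall (by linarith))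
    have hAmeas : MeasurableSet A := process_measurable hu hM n
    have hPmeas : MeasurableSet P := process_measurable hu hKc.measurableSet n
    have hAvol : volume A = volume M := process_volume hu hM n
    have hPvol : volume P = volume K := process_volume hu hKc.measurableSet n
    have hPfin : volume P ≠ ⊤ := by rw [hPvol]; exact hKfin
    have hDvol : volume D ≤ volume B + δ := hε'bound.le
    -- the three estimates
    have e1 : volume (A \ P) ≤ δ := by
      rw [measure_diff hPA hPmeas.nullMeasurableSet hPfin, hAvol, hPvol]
      exact tsub_le_iff_right.2 (by rw [add_comm]; exact hKvol.le)
    have e2 : volume (P \ B) ≤ δ := by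
      refine (measure_mono (Set.diff_subset_diff_left hPD)).trans ?_
      rw [measure_diff hBD measurableSet_ball.nullMeasurableSet hBfin]
      exact tsub_le_iff_right.2 (by rw [add_comm]; exact hDvol)
    have e3 : volume (B \ A) ≤ 2 * δ := by
      have hsub : B \ A ⊆ D \ P :=
        (Set.diff_subset_diff_right hPA).trans (Set.diff_subset_diff_left hBD)
      refine (measure_mono hsub).trans ?_
      rw [measure_diff hPD hPmeas.nullMeasurableSet hPfin]
      refine tsub_le_iff_right.2 ?_
      calc volume D ≤ volume B + δ := hDvol
        _ = volume M + δ := by rw [hB, hrvol]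
        _ ≤ (volume K + δ) + δ := add_le_add_left hKvol.le δ
        _ = 2 * δ + volume P := by rw [hPvol]; ring
    have e0 : volume (A \ B) ≤ volume (A \ P) + volume (P \ B) := by
      refine (measure_mono ?_).trans (measure_union_le _ _)
      intro y hy
      by_cases hyP : y ∈ P
      · exact Or.inr ⟨hyP, hy.2⟩
      · exact Or.inl ⟨hy.1, hyP⟩
    calc volume (symmDiff A B) ≤ volume (A \ B) + volume (B \ A) := by
          rw [Set.symmDiff_def]; exact measure_union_le _ _
      _ ≤ (δ + δ) + 2 * δ := add_le_add (e0.trans (add_le_add e1 e2)) e3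
      _ = 4 * δ := by ring
      _ = m := by rw [hδ]; exact ENNReal.mul_div_cancel' (by norm_num) (by norm_num)
      _ ≤ ε := (min_le_left _ _).trans (min_le_left _ _)
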